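/- arXiv:2403.04043 — 4 statements merged into one kernel-verified Lean document; each statement's English description precedes it below -/
import Mathlib

section
/- Under the same hypotheses, for every x ∈ F_T with coding sequence y, Dim(x) = sdim(F_T) · Dim^{μ_ℓ}(y), where Dim denotes limsup in place of liminf in the definitions of effective dimension. -/
open Pointwise


/-- A set of strings is prefix-free. -/
def PrefixFreeSet {α : Type*} (D : Set (List α)) : Prop :=
  ∀ p ∈ D, ∀ q ∈ D, p <+: q → p = q

/-- The Kolmogorov complexity of σ relative to a (partial) machine U. -/
noncomputable def Kof {β : Type*} (U : List Bool →. List β) (σ : List β) : ℕ :=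
  sInf {n : ℕ | ∃ p : List Bool, p.length = n ∧ σ ∈ U p}

/-- U is a universal prefix-free machine: it is partial computable, its domain is
prefix-free, every string is in its range, and it is optimal among all prefix-free
machines up to an additive constant. -/
def IsUniversalPF {β : Type*} [Primcodable β] (U : List Bool →. List β) : Prop :=
  Partrec U ∧ PrefixFreeSet {p | (U p).Dom} ∧ (∀ σ, ∃ p, σ ∈ U p) ∧
    ∀ M : List Bool →. List β, Partrec M → PrefixFreeSet {p | (M p).Dom} →
      ∃ d : ℕ, ∀ σ, (∃ p, σ ∈ M p) → Kof U σ ≤ Kof M σ + d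


/-- The substring x↾[a,b) of an infinite sequence x. -/
def seg {m : ℕ} (x : ℕ → Fin m) (a b : ℕ) : List (Fin m) :=
  List.ofFn (fun i : Fin (b - a) => x (a + i))

open Filter

namespace DimProofAux

lemma prefixFree_subset {γ : Type*} {D D' : Set (List γ)} (h : PrefixFreeSet D)
    (hsub : D' ⊆ D) : PrefixFreeSet D' :=
  fun p hp q hq hpq => h p (hsub hp) q (hsub hq) hpq

lemma Kof_le {β : Type*} (U : List Bool →. List β) (σ : List β) {nn : ℕ}
    (h : ∃ p : List Bool, p.length = nn ∧ σ ∈ U p) : Kof U σ ≤ nn :=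
  Nat.sInf_le h

lemma Kof_spec {β : Type*} (U : List Bool →. List β) (σ : List β)
    (h : ∃ p, σ ∈ U p) : ∃ p, σ ∈ U p ∧ p.length = Kof U σ := by
  obtain ⟨p, hp⟩ := h
  have hne : {n : ℕ | ∃ p : List Bool, p.length = n ∧ σ ∈ U p}.Nonempty :=
    ⟨p.length, p, rfl, hp⟩
  obtain ⟨q, hq1, hq2⟩ := Nat.sInf_mem hne
  exact ⟨q, hq2, hq1⟩

lemma sInf_eq_sInf_of_eps (S T : Set ℝ) (hS : ∀ a ∈ S, 0 ≤ a) (hT : ∀ a ∈ T, 0 ≤ a)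
    (hST : ∀ a ∈ S, ∀ ε > 0, a + ε ∈ T) (hTS : ∀ a ∈ T, ∀ ε > 0, a + ε ∈ S) :
    sInf S = sInf T := by
  rcases S.eq_empty_or_nonempty with hSe | hSne
  · rcases T.eq_empty_or_nonempty with hTe | hTne
    · rw [hSe, hTe]
    · obtain ⟨a, ha⟩ := hTne
      have := hTS a ha 1 one_pos
      rw [hSe] at this; exact absurd this (Set.notMem_empty _)
  · rcases T.eq_empty_or_nonempty with hTe | hTne
    · obtain ⟨a, ha⟩ := hSne
      have := hST a ha 1 one_pos
      rw [hTe] at this; exact absurd this (Set.notMem_empty _)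
    · have hbS : BddBelow S := ⟨0, fun a ha => hS a ha⟩
      have hbT : BddBelow T := ⟨0, fun a ha => hT a ha⟩
      have key : ∀ (A B : Set ℝ), A.Nonempty → BddBelow A → B.Nonempty →
          (∀ a ∈ B, ∀ ε > 0, a + ε ∈ A) → sInf A ≤ sInf B := by
        intro A B hAne hbA hBne hBA
        apply le_of_forall_pos_le_add
        intro ε hε
        obtain ⟨a, haB, halt⟩ := Real.lt_sInf_add_pos hBne (half_pos hε)
        have : a + ε/2 ∈ A := hBA a haB _ (half_pos hε)
        calc sInf A ≤ a + ε/2 := csInf_le hbA this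
          _ ≤ sInf B + ε/2 + ε/2 := by linarith
          _ = sInf B + ε := by ring
      refine le_antisymm (key S T hSne hbS hTne hTS) (key T S hTne hbT hSne hST)

-- seg lemmas
variable {m : ℕ} {x : ℕ → Fin m}

lemma seg_length (a b : ℕ) : (seg x a b).length = b - a := by simp [seg]

lemma seg_getElem {a b i : ℕ} (h : i < (seg x a b).length) :
    (seg x a b)[i] = x (a + i) := by
  simp [seg]

lemma seg_append {a b c : ℕ} (hab : a ≤ b) (hbc : b ≤ c) :
    seg x a b ++ seg x b c = seg x a c := by
  apply List.ext_getElem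
  · simp [seg_length]; omega
  · intro i h1 h2
    rw [List.getElem_append]
    split
    · rw [seg_getElem, seg_getElem]
    · rw [seg_getElem, seg_getElem]
      congr 1
      rw [seg_length] at *
      omega

lemma seg_singleton (a : ℕ) : seg x a (a + 1) = [x a] := by
  have h1 : (seg x a (a+1)).length = 1 := by rw [seg_length]; omega
  apply List.ext_getElem
  · simpa using h1
  · intro i hi hi2
    have hi0 : i = 0 := by rw [h1] at hi; omega
    subst hi0
    rw [seg_getElem]; simp

lemma seg_take {b c : ℕ} (h : c ≤ b) : (seg x 0 b).take c = seg x 0 c := by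
  apply List.ext_getElem
  · simp [seg_length]; omega
  · intro i h1 h2
    rw [List.getElem_take, seg_getElem, seg_getElem]


def codeWord {m k : ℕ} (τ : Fin k → List (Fin m)) (w : List (Fin k)) : List (Fin m) :=
  (w.map τ).flatten

@[simp] lemma codeWord_nil {m k : ℕ} (τ : Fin k → List (Fin m)) : codeWord τ [] = [] := rfl

@[simp] lemma codeWord_cons {m k : ℕ} (τ : Fin k → List (Fin m)) (i : Fin k) (w : List (Fin k)) :
    codeWord τ (i :: w) = τ i ++ codeWord τ w := by simp [codeWord]

lemma codeWord_inj {m k : ℕ} {τ : Fin k → List (Fin m)}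
    (hτlen : ∀ i, 1 ≤ (τ i).length)
    (hτpf : ∀ i j : Fin k, i ≠ j → ¬ τ i <+: τ j) :
    Function.Injective (codeWord τ) := by
  intro w1
  induction w1 with
  | nil =>
    intro w2 h
    cases w2 with
    | nil => rfl
    | cons i t =>
      exfalso
      have hl := congrArg List.length h
      simp only [codeWord_nil, codeWord_cons, List.length_nil, List.length_append] at hl
      have := hτlen i
      omega
  | cons i t ih =>
    intro w2 h
    cases w2 with
    | nil =>
      exfalso
      have hl := congrArg List.length h
      simp only [codeWord_nil, codeWord_cons, List.length_nil, List.length_append] at hl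
      have := hτlen i
      omega
    | cons i' t' =>
      simp only [codeWord_cons] at h
      have hpre : τ i <+: τ i' ∨ τ i' <+: τ i := by
        apply List.prefix_or_prefix_of_prefix (l₃ := τ i ++ codeWord τ t)
        · exact List.prefix_append _ _
        · rw [h]; exact List.prefix_append _ _
      have hii : i = i' := by
        by_contra hne
        rcases hpre with hp | hp
        · exact hτpf i i' hne hp
        · exact hτpf i' i (Ne.symm hne) hp
      subst hii
      have := List.append_cancel_left h
      rw [ih this]

lemma codeWord_primrec {m k : ℕ} (τ : Fin k → List (Fin m)) :
    Primrec (codeWord τ) := by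
  have h1 : Primrec fun w : List (Fin k) => w.map τ :=
    Primrec.list_map Primrec.id ((Primrec.dom_finite τ).comp Primrec.snd).to₂
  exact Primrec.list_flatten.comp h1

def cnt (l : List Bool) : ℕ := l.foldr (fun b acc => cond b (acc + 1) acc) 0

lemma cnt_primrec : Primrec cnt := by
  have hh : Primrec fun p : List Bool × Bool × ℕ => cond p.2.1 (p.2.2 + 1) p.2.2 :=
    Primrec.cond (Primrec.fst.comp Primrec.snd)
      (Primrec.succ.comp (Primrec.snd.comp Primrec.snd))
      (Primrec.snd.comp Primrec.snd)
  have := Primrec.list_foldr (α := List Bool) (β := Bool) (σ := ℕ)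
      (f := id) (g := fun _ => 0) (h := fun _ p => cond p.1 (p.2 + 1) p.2)
      Primrec.id (Primrec.const 0) hh
  exact this.of_eq fun l => rfl

@[simp] lemma cnt_rep_false (e : ℕ) : cnt (List.replicate e false) = 0 := by
  induction e with
  | zero => rfl
  | succ e ih => simp [cnt, List.replicate_succ] at *; exact ih

lemma cnt_rep_true_append (d : ℕ) (l : List Bool) :
    cnt (List.replicate d true ++ l) = d + cnt l := by
  induction d with
  | zero => simp
  | succ d ih => simp [cnt, List.replicate_succ] at *; omega

lemma rangeMap_take {γ : Type*} (l : List γ) (e : γ) {nn : ℕ} (hn : nn ≤ l.length) :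
    (List.range nn).map (fun i => l.getD i e) = l.take nn := by
  apply List.ext_getElem
  · simp; omega
  · intro i h1 h2
    simp only [List.getElem_map, List.getElem_range, List.getElem_take]
    exact List.getD_eq_getElem l e (by simp at h1; omega)

lemma rangeMap_drop {γ : Type*} (l : List γ) (e : γ) (L : ℕ) :
    (List.range (l.length - L)).map (fun i => l.getD (L + i) e) = l.drop L := by
  apply List.ext_getElem
  · simp
  · intro i h1 h2
    simp only [List.getElem_map, List.getElem_range, List.getElem_drop]
    exact List.getD_eq_getElem l e (by simp at h1; omega)


/-- Encoding bound: K_m(code w) ≤ K_k(w) + O(1). -/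
lemma exists_C1 {m k : ℕ} (Um : List Bool →. List (Fin m)) (hUm : IsUniversalPF Um)
    (Uk : List Bool →. List (Fin k)) (hUk : IsUniversalPF Uk)
    (τ : Fin k → List (Fin m)) :
    ∃ C : ℕ, ∀ w : List (Fin k), Kof Um (codeWord τ w) ≤ Kof Uk w + C := by
  set M1 : List Bool →. List (Fin m) := fun p => (Uk p).map (codeWord τ) with hM1
  have hpart : Partrec M1 :=
    hUk.1.map (((codeWord_primrec τ).to_comp).comp Computable.snd).to₂
  have hpf : PrefixFreeSet {p | (M1 p).Dom} := by
    apply prefixFree_subset hUk.2.1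
    intro p hp
    obtain ⟨a, ha⟩ := Part.dom_iff_mem.mp hp
    obtain ⟨b, hb, _⟩ := (Part.mem_map_iff _).mp ha
    exact Part.dom_iff_mem.mpr ⟨b, hb⟩
  obtain ⟨d, hd⟩ := hUm.2.2.2 M1 hpart hpf
  refine ⟨d, fun w => ?_⟩
  obtain ⟨p0, hp0, hlen⟩ := Kof_spec Uk w (hUk.2.2.1 w)
  have hmem : codeWord τ w ∈ M1 p0 := Part.mem_map _ hp0
  have h1 : Kof M1 (codeWord τ w) ≤ Kof Uk w := Kof_le _ _ ⟨p0, hlen, hmem⟩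
  have h2 := hd (codeWord τ w) ⟨p0, hmem⟩
  omega

/-- Decoding bound: K_k(w) ≤ K_m(code w) + O(1). -/
lemma exists_C2 {m k : ℕ} (Um : List Bool →. List (Fin m)) (hUm : IsUniversalPF Um)
    (Uk : List Bool →. List (Fin k)) (hUk : IsUniversalPF Uk)
    (τ : Fin k → List (Fin m)) (hinj : Function.Injective (codeWord τ)) :
    ∃ C : ℕ, ∀ w : List (Fin k), Kof Uk w ≤ Kof Um (codeWord τ w) + C := by
  classical
  set F : List Bool × List (Fin m) → ℕ → Option (List (Fin k)) := fun pr nn =>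
    (Encodable.decode (α := List (Fin k)) nn).bind fun w =>
      if codeWord τ w = pr.2 then some w else none with hF
  set M2 : List Bool →. List (Fin k) := fun p =>
    (Um p).bind fun σ => Nat.rfindOpt (F (p, σ)) with hM2
  have hFc : Computable₂ F := by
    apply Computable.option_bind (Computable.decode.comp Computable.snd)
    have : Primrec fun q : ((List Bool × List (Fin m)) × ℕ) × List (Fin k) =>
        if codeWord τ q.2 = q.1.1.2 then some q.2 else none :=
      Primrec.ite
        (Primrec.eq.comp ((codeWord_primrec τ).comp Primrec.snd)
          (Primrec.snd.comp (Primrec.fst.comp Primrec.fst)))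
        (Primrec.option_some.comp Primrec.snd) (Primrec.const none)
    exact this.to₂.to_comp
  have hpart : Partrec M2 := by
    apply hUm.1.bind
    exact (Partrec.rfindOpt hFc : Partrec fun pr : List Bool × List (Fin m) =>
      Nat.rfindOpt (F pr)).of_eq (fun pr => by rfl)
  have hpf : PrefixFreeSet {p | (M2 p).Dom} := by
    apply prefixFree_subset hUm.2.1
    intro p hp
    obtain ⟨a, ha⟩ := Part.dom_iff_mem.mp hp
    obtain ⟨b, hb, _⟩ := Part.mem_bind_iff.mp ha
    exact Part.dom_iff_mem.mpr ⟨b, hb⟩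
  obtain ⟨d, hd⟩ := hUk.2.2.2 M2 hpart hpf
  refine ⟨d, fun w => ?_⟩
  obtain ⟨p0, hp0, hlen⟩ := Kof_spec Um (codeWord τ w) (hUm.2.2.1 _)
  -- w ∈ rfindOpt (F (p0, codeWord τ w))
  have hmemF : w ∈ F (p0, codeWord τ w) (Encodable.encode w) := by
    show w ∈ (Encodable.decode (α := List (Fin k)) (Encodable.encode w)).bind fun w' =>
      if codeWord τ w' = codeWord τ w then some w' else none
    rw [Encodable.encodek]
    simp
  have hdom : (Nat.rfindOpt (F (p0, codeWord τ w))).Dom :=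
    Nat.rfindOpt_dom.2 ⟨_, _, hmemF⟩
  have hget := Part.get_mem hdom
  have hgw : (Nat.rfindOpt (F (p0, codeWord τ w))).get hdom = w := by
    obtain ⟨nn, hnn⟩ := Nat.rfindOpt_spec hget
    simp only [hF, Option.mem_def, Option.bind_eq_some_iff] at hnn
    obtain ⟨w', hw1, hw2⟩ := hnn
    split at hw2
    · rename_i heq
      have hww : w' = w := hinj heq
      have haw : w' = (Nat.rfindOpt (F (p0, codeWord τ w))).get hdom :=
        Option.some_inj.mp hw2
      rw [← haw, hww]
    · exact absurd hw2 (by simp)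
  have hmem2 : w ∈ M2 p0 := by
    have hmem3 := hget
    rw [hgw] at hmem3
    exact Part.mem_bind_iff.mpr ⟨codeWord τ w, hp0, hmem3⟩
  have h1 : Kof M2 w ≤ Kof Um (codeWord τ w) := Kof_le _ _ ⟨p0, hlen, hmem2⟩
  have h2 := hd w ⟨p0, hmem2⟩
  omega

/-- Truncation bound: K(σ.take (|σ|-d)) ≤ K(σ) + O(1), uniformly for d ≤ L. -/
lemma exists_C3 {m : ℕ} (hm : 0 < m) (Um : List Bool →. List (Fin m))
    (hUm : IsUniversalPF Um) (L : ℕ) :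
    ∃ C : ℕ, ∀ (σ : List (Fin m)) (d : ℕ), d ≤ L →
      Kof Um (σ.take (σ.length - d)) ≤ Kof Um σ + C := by
  classical
  set z : Fin m := ⟨0, hm⟩ with hz
  set hdrDec : List Bool → Option (ℕ × List Bool) := fun p =>
    if L ≤ p.length then
      some (cnt ((List.range L).map fun i => p.getD i false),
        (List.range (p.length - L)).map fun i => p.getD (L + i) false)
    else none with hhdr
  set M3 : List Bool →. List (Fin m) := fun p =>
    (↑(hdrDec p) : Part (ℕ × List Bool)).bind fun dq =>
      (Um dq.2).map fun σ => (List.range (σ.length - dq.1)).map fun i => σ.getD i z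
    with hM3
  have hdrPrim : Primrec hdrDec := by
    apply Primrec.ite (Primrec.nat_le.comp (Primrec.const L) Primrec.list_length)
    · apply Primrec.option_some.comp
      apply Primrec.pair
      · exact cnt_primrec.comp
          (Primrec.list_map (Primrec.const (List.range L)) (Primrec.list_getD false))
      · exact Primrec.list_map
          (Primrec.list_range.comp (Primrec.nat_sub.comp Primrec.list_length (Primrec.const L)))
          (((Primrec.list_getD false).comp Primrec.fst
            (Primrec.nat_add.comp (Primrec.const L) Primrec.snd)).to₂)
    · exact Primrec.const none
  have hpart : Partrec M3 := by
    apply Partrec.bind (Computable.ofOption hdrPrim.to_comp)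
    have htr : Primrec fun q : (List Bool × ℕ × List Bool) × List (Fin m) =>
        (List.range (q.2.length - q.1.2.1)).map fun i => q.2.getD i z :=
      Primrec.list_map
        (Primrec.list_range.comp (Primrec.nat_sub.comp
          (Primrec.list_length.comp Primrec.snd)
          (Primrec.fst.comp (Primrec.snd.comp Primrec.fst))))
        (((Primrec.list_getD z).comp (Primrec.snd.comp Primrec.fst) Primrec.snd).to₂)
    exact Partrec.map (hUm.1.comp (Computable.snd.comp Computable.snd)) htr.to₂.to_comp
  have hdomDrop : ∀ p, (M3 p).Dom → L ≤ p.length ∧ (Um (p.drop L)).Dom := by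
    intro p hp
    obtain ⟨a, ha⟩ := Part.dom_iff_mem.mp hp
    obtain ⟨dq, hdq, hmem⟩ := Part.mem_bind_iff.mp ha
    rw [Part.mem_ofOption] at hdq
    by_cases hL : L ≤ p.length
    · refine ⟨hL, ?_⟩
      simp only [hhdr, if_pos hL, Option.mem_def, Option.some_inj] at hdq
      obtain ⟨σ, hσ, _⟩ := (Part.mem_map_iff _).mp hmem
      refine Part.dom_iff_mem.mpr ⟨σ, ?_⟩
      rwa [← hdq, rangeMap_drop p false L] at hσ
    · simp [hhdr, if_neg hL] at hdq
  have hpf : PrefixFreeSet {p | (M3 p).Dom} := by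
    intro p hp q hq hpq
    obtain ⟨hLp, hdp⟩ := hdomDrop p hp
    obtain ⟨hLq, hdq⟩ := hdomDrop q hq
    obtain ⟨t, rfl⟩ := hpq
    have hdrop : (p ++ t).drop L = p.drop L ++ t := List.drop_append_of_le_length hLp
    have hpre : p.drop L <+: (p ++ t).drop L := by rw [hdrop]; exact ⟨t, rfl⟩
    have heq : p.drop L = (p ++ t).drop L := hUm.2.1 _ hdp _ hdq hpre
    have hl2 := congrArg List.length heq
    rw [hdrop] at hl2
    simp only [List.length_drop, List.length_append] at hl2
    have ht0 : t.length = 0 := by omega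
    rw [List.eq_nil_of_length_eq_zero ht0, List.append_nil]
  obtain ⟨d3, hd3⟩ := hUm.2.2.2 M3 hpart hpf
  refine ⟨L + d3, fun σ d hdL => ?_⟩
  obtain ⟨p0, hp0, hlen⟩ := Kof_spec Um σ (hUm.2.2.1 σ)
  set hdr : List Bool := List.replicate d true ++ List.replicate (L - d) false with hhdr2
  have hdrlen : hdr.length = L := by simp [hhdr2]; omega
  set prog : List Bool := hdr ++ p0 with hprog
  have hdec : hdrDec prog = some (d, p0) := by
    have hLp : L ≤ prog.length := by simp [hprog, hdrlen]
    simp only [hhdr]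
    rw [if_pos hLp]
    congr 1
    have h1 : (List.range L).map (fun i => prog.getD i false) = hdr := by
      rw [rangeMap_take prog false (by simp [hprog, hdrlen]), hprog,
        List.take_left' hdrlen]
    have h2 : (List.range (prog.length - L)).map (fun i => prog.getD (L + i) false) = p0 := by
      rw [rangeMap_drop prog false L, hprog, List.drop_left' hdrlen]
    rw [h1, h2, hhdr2, cnt_rep_true_append, cnt_rep_false]
    simp
  have hmem : σ.take (σ.length - d) ∈ M3 prog := by
    have h4 : (d, p0) ∈ (↑(hdrDec prog) : Part (ℕ × List Bool)) := by
      rw [Part.mem_ofOption, hdec]; rfl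
    have h6 : σ.take (σ.length - d) ∈
        Part.map (fun σ' : List (Fin m) =>
          (List.range (σ'.length - d)).map fun i => σ'.getD i z) (Um p0) := by
      have h5 : σ.take (σ.length - d)
          = (List.range (σ.length - d)).map fun i => σ.getD i z :=
        (rangeMap_take σ z (by omega)).symm
      rw [h5]
      exact Part.mem_map _ hp0
    exact Part.mem_bind_iff.mpr ⟨(d, p0), h4, h6⟩
  have h1 : Kof M3 (σ.take (σ.length - d)) ≤ L + Kof Um σ := by
    apply Kof_le
    exact ⟨prog, by simp [hprog, hdrlen, hlen], hmem⟩
  have h2 := hd3 _ ⟨prog, hmem⟩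
  omega


end DimProofAux

open Filter in
/-- Let T ⊆ Σ_m^* be a finite tree with k ≥ 2 terminal nodes
τ_0,...,τ_{k-1} (a prefix-free family of strings of positive length), with induced
length function ℓ_T(i) = |τ_i|, similarity dimension β = sdim(F_T) (the unique real
with ∑ m^{-β|τ_i|} = 1) and derived Bernoulli measure μ_ℓ(i) = r^{ℓ(i)}, r = m^{-β}.
For every x ∈ F_T (given by its T-sequence (n_j) and coding sequence y ∈ Σ_k^∞, so
that x↾[n_j, n_{j+1}) = τ_{y(j)}),
  Dim(x) = sdim(F_T) · Dim^{μ_ℓ}(y),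
where Dim(x) = limsup_N K(x↾N)/(N·log₂ m) and
Dim^{μ_ℓ}(y) = limsup_j K(y↾j)/(−log₂ μ_ℓ(y↾j)), K being prefix-free Kolmogorov
complexity on the respective alphabets. -/
theorem Dim_eq_sdim_mul_Dim_mu {m k : ℕ} (hm : 2 ≤ m) (hk : 2 ≤ k)
    (Um : List Bool →. List (Fin m)) (hUm : IsUniversalPF Um)
    (Uk : List Bool →. List (Fin k)) (hUk : IsUniversalPF Uk)
    (τ : Fin k → List (Fin m))
    (hτlen : ∀ i, 1 ≤ (τ i).length)
    (hτpf : ∀ i j : Fin k, i ≠ j → ¬ τ i <+: τ j)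
    (β : ℝ) (hβ : ∑ i : Fin k, (m : ℝ) ^ (-(β * ((τ i).length : ℝ))) = 1)
    (x : ℕ → Fin m) (y : ℕ → Fin k) (n : ℕ → ℕ)
    (hn0 : n 0 = 0) (hns : ∀ j, n (j + 1) = n j + (τ (y j)).length)
    (hblock : ∀ j, seg x (n j) (n (j + 1)) = τ (y j)) :
    limsup (fun N : ℕ => (Kof Um (seg x 0 N) : ℝ) / (N * Real.logb 2 m)) atTop
      = β * limsup (fun j : ℕ => (Kof Uk (seg y 0 j) : ℝ) /
          (-Real.logb 2 (((m : ℝ) ^ (-β)) ^ (∑ e ∈ Finset.range j, (τ (y e)).length))))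
          atTop := by
  classical
  open DimProofAux in
  have hm0 : (0:ℕ) < m := by omega
  have hmR : (1:ℝ) < (m:ℝ) := by exact_mod_cast hm
  have hm0R : (0:ℝ) < (m:ℝ) := by linarith
  have hlg : 0 < Real.logb 2 (m:ℝ) := Real.logb_pos one_lt_two hmR
  set lg : ℝ := Real.logb 2 (m:ℝ) with hlgdef
  -- β is positive
  have hβpos : 0 < β := by
    by_contra hβ0
    push_neg at hβ0
    have hterm : ∀ i : Fin k, (1:ℝ) ≤ (m:ℝ) ^ (-(β * ((τ i).length : ℝ))) := by
      intro i
      have h0 : (0:ℝ) ≤ -(β * ((τ i).length : ℝ)) := by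
        have : (0:ℝ) ≤ ((τ i).length : ℝ) := Nat.cast_nonneg _
        nlinarith
      calc (1:ℝ) = (m:ℝ) ^ (0:ℝ) := (Real.rpow_zero _).symm
        _ ≤ (m:ℝ) ^ (-(β * ((τ i).length : ℝ))) :=
          (Real.rpow_le_rpow_left_iff hmR).mpr h0
    have hk2 : (2:ℝ) ≤ (k:ℝ) := by exact_mod_cast hk
    have : (k:ℝ) ≤ 1 := by
      calc (k:ℝ) = ∑ _i : Fin k, (1:ℝ) := by simp
        _ ≤ ∑ i : Fin k, (m:ℝ) ^ (-(β * ((τ i).length : ℝ))) :=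
          Finset.sum_le_sum fun i _ => hterm i
        _ = 1 := hβ
    linarith
  have hβne : β ≠ 0 := ne_of_gt hβpos
  -- max block length
  have hkpos : 0 < k := by omega
  haveI : NeZero k := ⟨by omega⟩
  set L : ℕ := Finset.univ.sup (fun i : Fin k => (τ i).length) with hLdef
  have hτL : ∀ i, (τ i).length ≤ L := fun i => Finset.le_sup (f := fun i : Fin k => (τ i).length) (Finset.mem_univ i)
  -- facts about n
  have hnsum : ∀ j, n j = ∑ e ∈ Finset.range j, (τ (y e)).length := by
    intro j
    induction j with
    | zero => simpa using hn0
    | succ j ih => rw [hns, Finset.sum_range_succ, ih]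
  have hmono : StrictMono n := by
    apply strictMono_nat_of_lt_succ
    intro j
    rw [hns]
    have := hτlen (y j)
    omega
  have hnj : ∀ j, j ≤ n j := by
    intro j
    induction j with
    | zero => omega
    | succ j ih =>
      have := hmono (show j < j + 1 by omega)
      omega
  have hnL : ∀ j, n (j + 1) ≤ n j + L := by
    intro j
    rw [hns]
    have := hτL (y j)
    omega
  have hblockidx : ∀ N, ∃ j, n j ≤ N ∧ N < n (j + 1) := by
    intro N
    induction N with
    | zero =>
      refine ⟨0, by omega, ?_⟩
      have := hmono (show 0 < 0 + 1 by omega)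
      omega
    | succ N ih =>
      obtain ⟨j, h1, h2⟩ := ih
      by_cases h : N + 1 < n (j + 1)
      · exact ⟨j, by omega, h⟩
      · refine ⟨j + 1, by omega, ?_⟩
        have := hmono (show j + 1 < j + 1 + 1 by omega)
        omega
  -- coding identity
  have hcode : ∀ j, codeWord τ (seg y 0 j) = seg x 0 (n j) := by
    intro j
    induction j with
    | zero =>
      rw [hn0]
      simp [seg, codeWord]
    | succ j ih =>
      have h1 : seg y 0 (j + 1) = seg y 0 j ++ seg y j (j + 1) :=
        (seg_append (Nat.zero_le _) (by omega)).symm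
      rw [h1, seg_singleton]
      have h2 : codeWord τ (seg y 0 j ++ [y j])
          = codeWord τ (seg y 0 j) ++ codeWord τ [y j] := by simp [codeWord]
      have h3 : codeWord τ [y j] = τ (y j) := by simp [codeWord]
      rw [h2, h3, ih, ← hblock j,
        seg_append (Nat.zero_le _) (le_of_lt (hmono (show j < j + 1 by omega)))]
  -- constants from the machine lemmas
  obtain ⟨C1, hC1⟩ := exists_C1 Um hUm Uk hUk τ
  obtain ⟨C2, hC2⟩ := exists_C2 Um hUm Uk hUk τ (codeWord_inj hτlen hτpf)
  obtain ⟨C3, hC3⟩ := exists_C3 hm0 Um hUm L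
  have hK1 : ∀ j, Kof Um (seg x 0 (n j)) ≤ Kof Uk (seg y 0 j) + C1 := by
    intro j; rw [← hcode j]; exact hC1 _
  have hK2 : ∀ j, Kof Uk (seg y 0 j) ≤ Kof Um (seg x 0 (n j)) + C2 := by
    intro j
    have := hC2 (seg y 0 j)
    rwa [hcode j] at this
  have hK3 : ∀ N N' : ℕ, N ≤ N' → N' ≤ N + L →
      Kof Um (seg x 0 N) ≤ Kof Um (seg x 0 N') + C3 := by
    intro N N' h1 h2
    have h3 := hC3 (seg x 0 N') (N' - N) (by omega)
    have h4 : (seg x 0 N').length - (N' - N) = N := by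
      rw [seg_length]; omega
    rw [h4, seg_take h1] at h3
    exact h3
  -- the two real sequences
  set u : ℕ → ℝ := fun N => (Kof Um (seg x 0 N) : ℝ) / (N * lg) with hudef
  set v : ℕ → ℝ := fun j => (Kof Uk (seg y 0 j) : ℝ) / (n j * lg) with hvdef
  have hu0 : ∀ N, 0 ≤ u N := fun N =>
    div_nonneg (Nat.cast_nonneg _) (mul_nonneg (Nat.cast_nonneg _) hlg.le)
  have hv0 : ∀ j, 0 ≤ v j := fun j =>
    div_nonneg (Nat.cast_nonneg _) (mul_nonneg (Nat.cast_nonneg _) hlg.le)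
  -- RHS denominator simplification
  have hden : ∀ j : ℕ,
      -Real.logb 2 (((m : ℝ) ^ (-β)) ^ (∑ e ∈ Finset.range j, (τ (y e)).length))
        = β * ((n j : ℝ) * lg) := by
    intro j
    rw [← hnsum j, hlgdef]
    simp only [Real.logb]
    rw [Real.log_pow, Real.log_rpow hm0R]
    ring
  -- RHS function
  set v' : ℕ → ℝ := fun j => (Kof Uk (seg y 0 j) : ℝ) /
      (-Real.logb 2 (((m : ℝ) ^ (-β)) ^ (∑ e ∈ Finset.range j, (τ (y e)).length)))
    with hv'def
  have hvv : ∀ j, v j = β * v' j := by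
    intro j
    rw [hv'def]
    simp only
    rw [hden j, hvdef]
    simp only
    rcases eq_or_ne ((n j : ℝ) * lg) 0 with h | h
    · rw [h]; simp
    · field_simp
  -- rewrite both limsups as sInf
  rw [limsup_eq, limsup_eq]
  -- relate the two sInf sets for v and v'
  have hsmul : {a : ℝ | ∀ᶠ j in atTop, v j ≤ a} = β • {a : ℝ | ∀ᶠ j in atTop, v' j ≤ a} := by
    ext t
    simp only [Set.mem_smul_set, smul_eq_mul, Set.mem_setOf_eq]
    constructor
    · intro h
      refine ⟨t / β, ?_, mul_div_cancel₀ t hβne⟩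
      filter_upwards [h] with j hj
      rw [hvv j] at hj
      exact (le_div_iff₀' hβpos).mpr hj
    · rintro ⟨a, ha, rfl⟩
      filter_upwards [ha] with j hj
      rw [hvv j]
      exact mul_le_mul_of_nonneg_left hj hβpos.le
  have hmain : sInf {a : ℝ | ∀ᶠ N in atTop, u N ≤ a}
      = sInf {a : ℝ | ∀ᶠ j in atTop, v j ≤ a} := by
    apply sInf_eq_sInf_of_eps
    · intro a ha
      obtain ⟨N, hN⟩ := ha.exists
      exact le_trans (hu0 N) hN
    · intro a ha
      obtain ⟨j, hj⟩ := ha.exists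
      exact le_trans (hv0 j) hj
    · -- from u-bound to v-bound
      intro a ha ε hε
      have ha0 : 0 ≤ a := by
        obtain ⟨N, hN⟩ := ha.exists; exact le_trans (hu0 N) hN
      obtain ⟨N₀, hN₀⟩ := eventually_atTop.mp ha
      rw [Set.mem_setOf_eq, eventually_atTop]
      refine ⟨max N₀ (⌈(C2 : ℝ) / (ε * lg)⌉₊ + 1), fun j hj => ?_⟩
      have hjn : j ≤ n j := hnj j
      have h1 : N₀ ≤ n j := le_trans (le_trans (le_max_left _ _) hj) hjn
      have hu1 : u (n j) ≤ a := hN₀ _ h1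
      have hj1 : 1 ≤ j :=
        le_trans (le_trans (by omega : 1 ≤ ⌈(C2 : ℝ) / (ε * lg)⌉₊ + 1) (le_max_right _ _)) hj
      have hnjpos : 0 < n j := by omega
      have hpos : (0:ℝ) < (n j : ℝ) * lg :=
        mul_pos (by exact_mod_cast hnjpos) hlg
      have hKx : (Kof Um (seg x 0 (n j)) : ℝ) ≤ a * ((n j : ℝ) * lg) := by
        rw [hudef] at hu1
        simp only at hu1
        exact (div_le_iff₀ hpos).mp hu1
      have hC2j : (C2 : ℝ) ≤ ε * ((n j : ℝ) * lg) := by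
        have hceil : ((C2 : ℝ) / (ε * lg)) ≤ (⌈(C2 : ℝ) / (ε * lg)⌉₊ : ℝ) := Nat.le_ceil _
        have hjC : (⌈(C2 : ℝ) / (ε * lg)⌉₊ : ℝ) ≤ (n j : ℝ) := by
          have h2 : ⌈(C2 : ℝ) / (ε * lg)⌉₊ ≤ n j := by
            have h3 : ⌈(C2 : ℝ) / (ε * lg)⌉₊ + 1 ≤ j :=
              le_trans (le_max_right _ _) hj
            omega
          exact_mod_cast h2
        have hεlg : 0 < ε * lg := mul_pos hε hlg
        have h4 := (div_le_iff₀ hεlg).mp (le_trans hceil hjC)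
        rw [show ε * ((n j : ℝ) * lg) = (n j : ℝ) * (ε * lg) from by ring]
        exact h4
      have hKy : (Kof Uk (seg y 0 j) : ℝ) ≤ a * ((n j : ℝ) * lg) + C2 := by
        have h2 : (Kof Uk (seg y 0 j) : ℝ) ≤ (Kof Um (seg x 0 (n j)) : ℝ) + C2 := by
          exact_mod_cast hK2 j
        linarith
      show v j ≤ a + ε
      rw [hvdef]
      simp only
      rw [div_le_iff₀ hpos]
      have h5 : (a + ε) * ((n j : ℝ) * lg)
          = a * ((n j : ℝ) * lg) + ε * ((n j : ℝ) * lg) := by ring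
      linarith
    · -- from v-bound to u-bound
      intro a ha ε hε
      have ha0 : 0 ≤ a := by
        obtain ⟨j, hj⟩ := ha.exists; exact le_trans (hv0 j) hj
      obtain ⟨J₁, hJ₁⟩ := eventually_atTop.mp ha
      set A : ℝ := a * L * lg + C1 + C3 with hA
      rw [Set.mem_setOf_eq, eventually_atTop]
      refine ⟨max (n J₁) (⌈A / (ε * lg)⌉₊ + 1), fun N hN => ?_⟩
      obtain ⟨j, hj1, hj2⟩ := hblockidx N
      have hNpos : 1 ≤ N :=
        le_trans (le_trans (by omega : 1 ≤ ⌈A / (ε * lg)⌉₊ + 1) (le_max_right _ _)) hN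
      have hjJ : J₁ ≤ j + 1 := by
        have h3 : n J₁ ≤ N := le_trans (le_max_left _ _) hN
        have h4 : n J₁ < n (j + 1) := lt_of_le_of_lt h3 hj2
        exact le_of_lt (hmono.lt_iff_lt.mp h4)
      have hv1 : v (j + 1) ≤ a := hJ₁ _ hjJ
      have hn1pos : 0 < n (j + 1) := by have := hnj (j + 1); omega
      have hpos1 : (0:ℝ) < (n (j + 1) : ℝ) * lg :=
        mul_pos (by exact_mod_cast hn1pos) hlg
      have hKy : (Kof Uk (seg y 0 (j + 1)) : ℝ) ≤ a * ((n (j + 1) : ℝ) * lg) := by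
        rw [hvdef] at hv1
        simp only at hv1
        exact (div_le_iff₀ hpos1).mp hv1
      have hstep : (Kof Um (seg x 0 N) : ℝ)
          ≤ (Kof Uk (seg y 0 (j + 1)) : ℝ) + C1 + C3 := by
        have h5 := hK3 N (n (j + 1)) (le_of_lt hj2) (by have := hnL j; omega)
        have h6 := hK1 (j + 1)
        have h7 : Kof Um (seg x 0 N) ≤ Kof Uk (seg y 0 (j + 1)) + C1 + C3 := by omega
        exact_mod_cast h7
      have hn1N : (n (j + 1) : ℝ) ≤ (N : ℝ) + L := by
        have h8 : n (j + 1) ≤ N + L := by have := hnL j; omega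
        exact_mod_cast h8
      have hAN : A ≤ ε * ((N : ℝ) * lg) := by
        have hceil : A / (ε * lg) ≤ (⌈A / (ε * lg)⌉₊ : ℝ) := Nat.le_ceil _
        have hjC : (⌈A / (ε * lg)⌉₊ : ℝ) ≤ (N : ℝ) := by
          have h9 : ⌈A / (ε * lg)⌉₊ ≤ N := by
            have := le_trans (le_max_right _ _) hN; omega
          exact_mod_cast h9
        have hεlg : 0 < ε * lg := mul_pos hε hlg
        have h10 := (div_le_iff₀ hεlg).mp (le_trans hceil hjC)
        rw [show ε * ((N : ℝ) * lg) = (N : ℝ) * (ε * lg) from by ring]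
        exact h10
      show u N ≤ a + ε
      rw [hudef]
      simp only
      have hposN : (0:ℝ) < (N : ℝ) * lg := mul_pos (by exact_mod_cast hNpos) hlg
      rw [div_le_iff₀ hposN]
      have h11 : a * ((n (j + 1) : ℝ) * lg) ≤ a * (((N : ℝ) + L) * lg) :=
        mul_le_mul_of_nonneg_left (mul_le_mul_of_nonneg_right hn1N hlg.le) ha0
      have h12 : a * (((N : ℝ) + L) * lg)
          = a * ((N : ℝ) * lg) + a * L * lg := by ring
      have h13 : (a + ε) * ((N : ℝ) * lg)
          = a * ((N : ℝ) * lg) + ε * ((N : ℝ) * lg) := by ring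
      rw [hA] at hAN
      linarith
  rw [hmain, hsmul, Real.sInf_smul_of_nonneg hβpos.le]
  rfl
end

section
/- Let T be a finite tree with n non-terminal nodes and let A be the n×n adjacency matrix of the associated pointed directed graph G (vertices = non-terminal nodes of T; for each child relation an edge; each terminal node of T of depth d contributes to a path of length d from v_1 back to v_1). If p_A(z) = z^n + c_1 z^{n−1} + ⋯ + c_{n−1} z + c_n is the characteristic polynomial of A, then for each i = 1,...,n, −c_i equals the number of terminal nodes of T of depth i. -/
open scoped Classical
open Polynomial Matrix Finset

/-- A finite tree: downward closed under the prefix relation. -/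
def DownClosed {m : ℕ} (T : Finset (List (Fin m))) : Prop :=
  ∀ σ ∈ T, ∀ p : List (Fin m), p <+: σ → p ∈ T

/-- σ is a terminal node of T: a maximal element of T under the prefix relation. -/
def IsTerminal {m : ℕ} (T : Finset (List (Fin m))) (σ : List (Fin m)) : Prop :=
  σ ∈ T ∧ ∀ τ ∈ T, σ <+: τ → τ = σ

/-- The non-terminal nodes of T: the vertices of the associated pointed graph. -/
noncomputable def NonTerm {m : ℕ} (T : Finset (List (Fin m))) : Finset (List (Fin m)) :=
  T.filter (fun σ => ¬ IsTerminal T σ)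

lemma mem_nonTerm {m : ℕ} {T : Finset (List (Fin m))} {σ : List (Fin m)} :
    σ ∈ NonTerm T ↔ σ ∈ T ∧ ¬ IsTerminal T σ := by simp [NonTerm]

lemma nonTerm_of_proper_prefix {m : ℕ} {T : Finset (List (Fin m))} (hdc : DownClosed T)
    {σ ρ : List (Fin m)} (hσ : σ ∈ T) (hp : ρ <+: σ) (hne : ρ ≠ σ) : ρ ∈ NonTerm T := by
  refine mem_nonTerm.mpr ⟨hdc σ hσ ρ hp, fun ht => hne ?_⟩
  exact (ht.2 σ hσ hp).symm

noncomputable def Bmat {m : ℕ} (T : Finset (List (Fin m))) :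
    Matrix (NonTerm T) (NonTerm T) ℤ :=
  fun u v => ((Finset.univ.filter (fun a : Fin m =>
      (u : List (Fin m)) ++ [a] = (v : List (Fin m)))).card : ℤ)

lemma Bmat_apply {m : ℕ} (T : Finset (List (Fin m))) (u v : NonTerm T) :
    Bmat T u v = if ((u : List (Fin m)) <+: (v : List (Fin m)) ∧
      (v : List (Fin m)).length = (u : List (Fin m)).length + 1) then 1 else 0 := by
  rw [Bmat]
  split_ifs with h
  · obtain ⟨⟨t, ht⟩, hl⟩ := h
    have htl : t.length = 1 := by
      have := congrArg List.length ht
      simp at this; omega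
    obtain ⟨a, rfl⟩ : ∃ a, t = [a] := by
      match t, htl with
      | [a], _ => exact ⟨a, rfl⟩
    have : (Finset.univ.filter (fun a' : Fin m =>
        (u : List (Fin m)) ++ [a'] = (v : List (Fin m)))) = {a} := by
      ext a'
      simp only [Finset.mem_filter, Finset.mem_univ, true_and, Finset.mem_singleton, ← ht]
      constructor
      · intro h'; simpa using List.append_cancel_left h'
      · rintro rfl; rfl
    rw [this]; simp
  · simp only [Nat.cast_eq_zero]
    rw [Finset.card_eq_zero, Finset.filter_eq_empty_iff]
    intro a _ hav
    exact h ⟨⟨[a], hav⟩, by rw [← hav]; simp⟩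

lemma Bpow_apply {m : ℕ} {T : Finset (List (Fin m))} (hdc : DownClosed T)
    (k : ℕ) (u v : NonTerm T) :
    ((Bmat T) ^ k) u v = if ((u : List (Fin m)) <+: (v : List (Fin m)) ∧
      (v : List (Fin m)).length = (u : List (Fin m)).length + k) then 1 else 0 := by
  induction k generalizing v with
  | zero =>
    rw [pow_zero]
    by_cases h : u = v
    · subst h; simp [Matrix.one_apply]
    · rw [Matrix.one_apply_ne h, if_neg]
      rintro ⟨hp, hl⟩
      exact h (Subtype.ext (hp.eq_of_length (by omega)))
  | succ k ih =>
    rw [pow_succ, Matrix.mul_apply]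
    by_cases h : ((u : List (Fin m)) <+: (v : List (Fin m)) ∧
        (v : List (Fin m)).length = (u : List (Fin m)).length + (k + 1))
    · obtain ⟨hp, hl⟩ := h
      -- the intermediate vertex
      set wl : List (Fin m) := (v : List (Fin m)).take ((u : List (Fin m)).length + k) with hwl
      have hwp : wl <+: (v : List (Fin m)) := List.take_prefix _ _
      have hwlen : wl.length = (u : List (Fin m)).length + k := by
        rw [hwl, List.length_take]; omega
      have hvT : (v : List (Fin m)) ∈ T := (mem_nonTerm.mp v.2).1
      have hwmem : wl ∈ NonTerm T :=
        nonTerm_of_proper_prefix hdc hvT hwp (by intro he; rw [he] at hwlen; omega)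
      set w : NonTerm T := ⟨wl, hwmem⟩ with hw
      have huw : (u : List (Fin m)) <+: wl :=
        List.prefix_of_prefix_length_le hp hwp (by omega)
      have hsum : ∀ x : NonTerm T, x ≠ w →
          ((Bmat T) ^ k) u x * Bmat T x v = 0 := by
        intro x hx
        rw [ih x, Bmat_apply]
        by_cases h1 : ((u : List (Fin m)) <+: (x : List (Fin m)) ∧
            (x : List (Fin m)).length = (u : List (Fin m)).length + k)
        · by_cases h2 : ((x : List (Fin m)) <+: (v : List (Fin m)) ∧
              (v : List (Fin m)).length = (x : List (Fin m)).length + 1)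
          · exfalso
            apply hx
            apply Subtype.ext
            exact List.prefix_of_prefix_length_le h2.1 hwp (by omega)
              |>.eq_of_length (by omega)
          · rw [if_neg h2, mul_zero]
        · rw [if_neg h1, zero_mul]
      rw [Finset.sum_eq_single_of_mem w (Finset.mem_univ w) (fun x _ hx => hsum x hx)]
      have hwv : wl <+: (v : List (Fin m)) ∧
          (v : List (Fin m)).length = wl.length + 1 := ⟨hwp, by omega⟩
      rw [ih w, Bmat_apply, if_pos ⟨huw, by simpa using hwlen⟩, if_pos hwv,
        if_pos ⟨hp, hl⟩]
      ring
    · rw [if_neg h]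
      apply Finset.sum_eq_zero
      intro x _
      rw [ih x, Bmat_apply]
      by_cases h1 : ((u : List (Fin m)) <+: (x : List (Fin m)) ∧
          (x : List (Fin m)).length = (u : List (Fin m)).length + k)
      · by_cases h2 : ((x : List (Fin m)) <+: (v : List (Fin m)) ∧
            (v : List (Fin m)).length = (x : List (Fin m)).length + 1)
        · exact absurd ⟨h1.1.trans h2.1, by omega⟩ h
        · rw [if_neg h2, mul_zero]
      · rw [if_neg h1, zero_mul]


lemma length_lt_card {m : ℕ} {T : Finset (List (Fin m))} (hdc : DownClosed T)
    (v : NonTerm T) : (v : List (Fin m)).length + 1 ≤ Fintype.card (NonTerm T) := by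
  classical
  have hmem : ∀ j : Fin ((v : List (Fin m)).length + 1),
      (v : List (Fin m)).take j ∈ NonTerm T := by
    intro j
    by_cases h : (v : List (Fin m)).take j = (v : List (Fin m))
    · rw [h]; exact v.2
    · exact nonTerm_of_proper_prefix hdc (mem_nonTerm.mp v.2).1 (List.take_prefix _ _) h
  have hinj : Function.Injective (fun j : Fin ((v : List (Fin m)).length + 1) =>
      (⟨(v : List (Fin m)).take j, hmem j⟩ : NonTerm T)) := by
    intro a b hab
    have := congrArg (fun l : List (Fin m) => l.length) (Subtype.ext_iff.mp hab)
    simp only [List.length_take] at this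
    omega
  simpa using Fintype.card_le_of_injective _ hinj

lemma Bmat_pow_card {m : ℕ} {T : Finset (List (Fin m))} (hdc : DownClosed T) :
    (Bmat T) ^ (Fintype.card (NonTerm T)) = 0 := by
  ext u v : 2
  rw [Bpow_apply hdc, if_neg, Matrix.zero_apply]
  rintro ⟨hp, hl⟩
  have := length_lt_card hdc v
  have := hp.length_le
  omega

lemma charpoly_Bmat {m : ℕ} {T : Finset (List (Fin m))} (hdc : DownClosed T) :
    (Bmat T).charpoly = X ^ (Fintype.card (NonTerm T)) := by
  have h := Matrix.isNilpotent_charpoly_sub_pow_of_isNilpotent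
    (M := Bmat T) ⟨Fintype.card (NonTerm T), Bmat_pow_card hdc⟩
  have := h.eq_zero
  linear_combination (norm := ring_nf) this

noncomputable def Smat {m : ℕ} (T : Finset (List (Fin m))) :
    Matrix (NonTerm T) (NonTerm T) ℤ[X] :=
  ∑ k ∈ Finset.range (Fintype.card (NonTerm T)),
    (X : ℤ[X]) ^ (Fintype.card (NonTerm T) - 1 - k) • ((Bmat T) ^ k).map C

lemma charmatrix_mul_Smat {m : ℕ} {T : Finset (List (Fin m))} (hdc : DownClosed T) :
    charmatrix (Bmat T) * Smat T
      = ((X : ℤ[X]) ^ (Fintype.card (NonTerm T))) • 1 := by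
  set n := Fintype.card (NonTerm T) with hn
  set Bc : Matrix (NonTerm T) (NonTerm T) ℤ[X] := (Bmat T).map C with hBc
  have hmapk : ∀ k : ℕ, ((Bmat T) ^ k).map C = Bc ^ k := by
    intro k
    rw [hBc, ← RingHom.mapMatrix_apply, ← RingHom.mapMatrix_apply, map_pow]
  have key : charmatrix (Bmat T) * Smat T
      = ∑ k ∈ Finset.range n,
        (((X : ℤ[X]) ^ (n - k) • Bc ^ k) - ((X : ℤ[X]) ^ (n - (k+1)) • Bc ^ (k+1))) := by
    rw [Smat, Finset.mul_sum]
    apply Finset.sum_congr rfl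
    intro k hk
    have hk' : k < n := Finset.mem_range.mp hk
    have e1 : n - 1 - k + 1 = n - k := by omega
    have e2 : n - (k + 1) = n - 1 - k := by omega
    have hsc : (Matrix.scalar { x // x ∈ NonTerm T } (X : ℤ[X]))
        = (X : ℤ[X]) • (1 : Matrix (NonTerm T) (NonTerm T) ℤ[X]) := by
      rw [Matrix.scalar_apply, Matrix.smul_one_eq_diagonal]
    rw [hmapk, charmatrix, hsc, sub_mul, Matrix.mul_smul, Matrix.mul_smul,
      Matrix.smul_mul, one_mul, smul_smul, ← pow_succ, e1,
      RingHom.mapMatrix_apply, ← hBc, ← pow_succ', e2]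
  have hBn : Bc ^ n = 0 := by rw [← hmapk, Bmat_pow_card hdc]; exact Matrix.map_zero _ (map_zero C)
  rw [key, Finset.sum_range_sub' (fun k => (X : ℤ[X]) ^ (n - k) • Bc ^ k) n, hBn]
  simp

lemma adjugate_charmatrix_Bmat {m : ℕ} {T : Finset (List (Fin m))} (hdc : DownClosed T) :
    (charmatrix (Bmat T)).adjugate = Smat T := by
  have h1 : charmatrix (Bmat T) * (charmatrix (Bmat T)).adjugate
      = ((X : ℤ[X]) ^ (Fintype.card (NonTerm T))) • 1 := by
    rw [Matrix.mul_adjugate, ← Matrix.charpoly, charpoly_Bmat hdc]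
  have e1 : (charmatrix (Bmat T)).adjugate * charmatrix (Bmat T)
      = ((X : ℤ[X]) ^ (Fintype.card (NonTerm T))) • 1 := by
    rw [Matrix.adjugate_mul, ← Matrix.charpoly, charpoly_Bmat hdc]
  have h2 := charmatrix_mul_Smat (T := T) hdc
  have h3 : ((X : ℤ[X]) ^ (Fintype.card (NonTerm T))) • (charmatrix (Bmat T)).adjugate
      = ((X : ℤ[X]) ^ (Fintype.card (NonTerm T))) • Smat T := by
    calc ((X : ℤ[X]) ^ (Fintype.card (NonTerm T))) • (charmatrix (Bmat T)).adjugate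
        = (((X : ℤ[X]) ^ (Fintype.card (NonTerm T))) • 1)
            * (charmatrix (Bmat T)).adjugate := by rw [Matrix.smul_mul, one_mul]
      _ = ((charmatrix (Bmat T)).adjugate * charmatrix (Bmat T))
            * (charmatrix (Bmat T)).adjugate := by rw [e1]
      _ = (charmatrix (Bmat T)).adjugate
            * (charmatrix (Bmat T) * (charmatrix (Bmat T)).adjugate) := by rw [mul_assoc]
      _ = (charmatrix (Bmat T)).adjugate * (charmatrix (Bmat T) * Smat T) := by rw [h1, h2]
      _ = ((charmatrix (Bmat T)).adjugate * charmatrix (Bmat T)) * Smat T := by rw [mul_assoc]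
      _ = ((X : ℤ[X]) ^ (Fintype.card (NonTerm T))) • Smat T := by
          rw [e1, Matrix.smul_mul, one_mul]
  refine Matrix.ext fun u v => ?_
  have h4 : ((X : ℤ[X]) ^ (Fintype.card (NonTerm T))) * (Bmat T).charmatrix.adjugate u v
      = ((X : ℤ[X]) ^ (Fintype.card (NonTerm T))) * Smat T u v := by
    simpa only [Matrix.smul_apply, smul_eq_mul] using congrFun (congrFun h3 u) v
  exact mul_left_cancel₀ (pow_ne_zero _ Polynomial.X_ne_zero) h4

lemma sum_uvec {m : ℕ} {T : Finset (List (Fin m))} (hdc : DownClosed T) (k : ℕ) :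
    ∑ v ∈ (NonTerm T).filter (fun v => v.length = k),
      (Finset.univ.filter (fun a : Fin m => IsTerminal T (v ++ [a]))).card
    = (T.filter (fun σ => IsTerminal T σ ∧ σ.length = k + 1)).card := by
  classical
  have hmaps : ∀ σ ∈ T.filter (fun σ => IsTerminal T σ ∧ σ.length = k + 1),
      σ.dropLast ∈ (NonTerm T).filter (fun v => v.length = k) := by
    intro σ hσ
    rw [Finset.mem_filter] at hσ
    obtain ⟨hσT, hterm, hlen⟩ := hσ
    have hne : σ ≠ [] := by intro h; rw [h] at hlen; simp at hlen
    have hpre : σ.dropLast <+: σ := ⟨[σ.getLast hne], List.dropLast_append_getLast hne⟩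
    have hlen' : σ.dropLast.length = k := by rw [List.length_dropLast]; omega
    refine Finset.mem_filter.mpr ⟨nonTerm_of_proper_prefix hdc hσT hpre ?_, hlen'⟩
    intro h
    have := congrArg List.length h
    rw [List.length_dropLast] at this; omega
  rw [Finset.card_eq_sum_card_fiberwise hmaps]
  apply Finset.sum_congr rfl
  intro v hv
  rw [Finset.mem_filter] at hv
  obtain ⟨hvNT, hvlen⟩ := hv
  refine Finset.card_bij (fun a _ => v ++ [a]) ?_ ?_ ?_
  · intro a ha
    rw [Finset.mem_filter] at ha ⊢
    refine ⟨Finset.mem_filter.mpr ⟨ha.2.1, ha.2, by simp [hvlen]⟩, ?_⟩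
    exact List.dropLast_concat
  · intro a _ b _ hab
    simpa using List.append_cancel_left hab
  · intro σ hσ
    rw [Finset.mem_filter, Finset.mem_filter] at hσ
    obtain ⟨⟨hσT, hterm, hlen⟩, hdrop⟩ := hσ
    have hne : σ ≠ [] := by intro h; rw [h] at hlen; simp at hlen
    refine ⟨σ.getLast hne, ?_, ?_⟩
    · rw [Finset.mem_filter]
      refine ⟨Finset.mem_univ _, ?_⟩
      have : v ++ [σ.getLast hne] = σ := by rw [← hdrop]; exact List.dropLast_append_getLast hne
      rw [this]; exact hterm
    · show v ++ [σ.getLast hne] = σ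
      rw [← hdrop]; exact List.dropLast_append_getLast hne

/-- Let T be a finite tree with n non-terminal nodes and let A be the
adjacency matrix of the associated pointed directed graph G: vertices are the
non-terminal nodes; for each child relation an edge labelled accordingly; and for each
terminal child of σ_i an edge from v_i back to the root v_1 = [].  If
p_A(z) = z^n + c_1 z^{n-1} + ⋯ + c_n is the characteristic polynomial of A, then for
each i = 1,...,n, −c_i equals the number of terminal nodes of T of depth i. -/
theorem charpoly_coeff_eq_neg_terminal_count {m : ℕ} (hm : 1 ≤ m)
    (T : Finset (List (Fin m))) (hdc : DownClosed T)
    (hroot : ([] : List (Fin m)) ∈ T) (hnt : ¬ IsTerminal T ([] : List (Fin m)))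
    (A : Matrix (NonTerm T) (NonTerm T) ℤ)
    (hA : ∀ u v : NonTerm T, A u v =
      ((Finset.univ.filter (fun a : Fin m =>
          (u : List (Fin m)) ++ [a] = (v : List (Fin m)))).card : ℤ)
      + (if (v : List (Fin m)) = [] then
          ((Finset.univ.filter (fun a : Fin m =>
            IsTerminal T ((u : List (Fin m)) ++ [a]))).card : ℤ) else 0))
    (i : ℕ) (hi1 : 1 ≤ i) (hi2 : i ≤ Fintype.card (NonTerm T)) :
    (Matrix.charpoly A).coeff (Fintype.card (NonTerm T) - i)
      = -((T.filter (fun σ => IsTerminal T σ ∧ σ.length = i)).card : ℤ) := by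
  classical
  set n := Fintype.card (NonTerm T) with hn
  set r : NonTerm T := ⟨[], mem_nonTerm.mpr ⟨hroot, hnt⟩⟩ with hr
  set w : NonTerm T → ℤ[X] := fun u =>
    C (((Finset.univ.filter (fun a : Fin m =>
      IsTerminal T ((u : List (Fin m)) ++ [a]))).card : ℤ)) with hw
  set tZ : ℕ → ℤ := fun j =>
    ((T.filter (fun σ => IsTerminal T σ ∧ σ.length = j)).card : ℤ) with htZ
  -- Step 1: the char matrix of A is that of B with column r modified
  have hBur : ∀ u : NonTerm T, Bmat T u r = 0 := by
    intro u
    rw [Bmat]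
    norm_cast
    rw [Finset.card_eq_zero, Finset.filter_eq_empty_iff]
    intro a _ h
    exact List.cons_ne_nil _ _ (List.append_eq_nil_iff.mp h).2
  have hcm : charmatrix A = (charmatrix (Bmat T)).updateCol r
      (fun u => charmatrix (Bmat T) u r - w u) := by
    refine Matrix.ext fun u v => ?_
    rw [Matrix.updateCol_apply]
    by_cases hvr : v = r
    · subst hvr
      rw [if_pos rfl, charmatrix_apply, charmatrix_apply, hA u r, hBur u]
      have : ((r : NonTerm T) : List (Fin m)) = [] := rfl
      rw [if_pos this]
      have hx : ((Finset.univ.filter (fun a : Fin m =>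
          (u : List (Fin m)) ++ [a] = ([] : List (Fin m)))).card : ℤ) = 0 := by
        simpa [Bmat] using hBur u
      rw [hx, zero_add, map_zero, sub_zero, hw]
    · rw [if_neg hvr, charmatrix_apply, charmatrix_apply, hA u v, Bmat]
      have : ¬ ((v : List (Fin m)) = []) := fun h => hvr (Subtype.ext h)
      rw [if_neg this]
      simp
  -- Step 2: charpoly A = charpoly B - cramer _ w r
  have hcp : Matrix.charpoly A = X ^ n - Matrix.cramer (charmatrix (Bmat T)) w r := by
    rw [Matrix.charpoly, hcm, ← Matrix.cramer_apply]
    have hfun : (fun u => charmatrix (Bmat T) u r - w u)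
        = (fun u => charmatrix (Bmat T) u r) - w := rfl
    rw [hfun, map_sub]
    rw [Pi.sub_apply, Matrix.cramer_apply, Matrix.updateCol_eq_self, ← Matrix.charpoly,
      charpoly_Bmat hdc, hn]
  -- Step 3: compute the cramer term
  have hcr : Matrix.cramer (charmatrix (Bmat T)) w r
      = ∑ k ∈ Finset.range n, (X : ℤ[X]) ^ (n - 1 - k) * C (tZ (k + 1)) := by
    rw [Matrix.cramer_eq_adjugate_mulVec, adjugate_charmatrix_Bmat hdc]
    rw [Matrix.mulVec, dotProduct]
    have : ∀ v : NonTerm T, Smat T r v * w v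
        = ∑ k ∈ Finset.range n, (X : ℤ[X]) ^ (n - 1 - k)
            * (C ((Bmat T ^ k) r v) * w v) := by
      intro v
      rw [Smat, Matrix.sum_apply, Finset.sum_mul]
      apply Finset.sum_congr rfl
      intro k _
      rw [Matrix.smul_apply, Matrix.map_apply, smul_eq_mul, ← hn]
      ring
    rw [Finset.sum_congr rfl (fun v _ => this v), Finset.sum_comm]
    apply Finset.sum_congr rfl
    intro k _
    rw [← Finset.mul_sum]
    congr 1
    have hsum : ∑ v : NonTerm T, C ((Bmat T ^ k) r v) * w v
        = C (∑ v : NonTerm T, (Bmat T ^ k) r v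
            * ((Finset.univ.filter (fun a : Fin m =>
              IsTerminal T ((v : List (Fin m)) ++ [a]))).card : ℤ)) := by
      rw [map_sum]
      apply Finset.sum_congr rfl
      intro v _
      rw [hw]
      exact (map_mul C _ _).symm
    rw [hsum]
    congr 1
    -- now a pure ℤ computation
    have h1 : ∀ v : NonTerm T, (Bmat T ^ k) r v
          * ((Finset.univ.filter (fun a : Fin m =>
            IsTerminal T ((v : List (Fin m)) ++ [a]))).card : ℤ)
        = (fun l : List (Fin m) => if l.length = k then
            ((Finset.univ.filter (fun a : Fin m =>
              IsTerminal T (l ++ [a]))).card : ℤ) else 0) (v : List (Fin m)) := by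
      intro v
      rw [Bpow_apply hdc]
      have : ((r : NonTerm T) : List (Fin m)) = [] := rfl
      rw [this]
      simp only [List.nil_prefix, List.length_nil, true_and, zero_add]
      split_ifs <;> simp
    have h2 : ∑ v : NonTerm T, (Bmat T ^ k) r v
          * ((Finset.univ.filter (fun a : Fin m =>
            IsTerminal T ((v : List (Fin m)) ++ [a]))).card : ℤ)
        = ∑ v ∈ NonTerm T, (fun l : List (Fin m) => if l.length = k then
            ((Finset.univ.filter (fun a : Fin m =>
              IsTerminal T (l ++ [a]))).card : ℤ) else 0) v := by
      rw [← Finset.sum_attach (NonTerm T) (fun l : List (Fin m) => if l.length = k then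
            ((Finset.univ.filter (fun a : Fin m =>
              IsTerminal T (l ++ [a]))).card : ℤ) else 0), ← Finset.univ_eq_attach]
      exact Finset.sum_congr rfl (fun v _ => h1 v)
    rw [h2]
    simp only []
    rw [← Finset.sum_filter]
    have h3 := sum_uvec (T := T) hdc k
    calc (∑ v ∈ (NonTerm T).filter (fun v => v.length = k),
            ((Finset.univ.filter (fun a : Fin m => IsTerminal T (v ++ [a]))).card : ℤ))
        = ((∑ v ∈ (NonTerm T).filter (fun v => v.length = k),
            (Finset.univ.filter (fun a : Fin m => IsTerminal T (v ++ [a]))).card : ℕ) : ℤ) := by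
          push_cast; rfl
      _ = tZ (k + 1) := by rw [h3, htZ]
  -- Step 4: extract the coefficient
  rw [hcp, hcr, Polynomial.coeff_sub, Polynomial.coeff_X_pow,
    if_neg (by omega : ¬ (n - i = n)), Polynomial.finset_sum_coeff]
  have hterm : ∀ k ∈ Finset.range n,
      ((X : ℤ[X]) ^ (n - 1 - k) * C (tZ (k + 1))).coeff (n - i)
        = if k = i - 1 then tZ (k + 1) else 0 := by
    intro k hk
    rw [Finset.mem_range] at hk
    rw [mul_comm, Polynomial.coeff_C_mul_X_pow]
    congr 1
    simp only [eq_iff_iff]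
    omega
  rw [Finset.sum_congr rfl hterm, Finset.sum_ite_eq' (Finset.range n) (i - 1)
    (fun k => tZ (k + 1)), if_pos (Finset.mem_range.mpr (by omega))]
  have : i - 1 + 1 = i := by omega
  rw [this, zero_sub, htZ]
end

section
/- Let T be a finite tree with n non-terminal nodes and terminal-node depth counts d_1,...,d_n (d_i the number of terminal nodes of depth i). Let A be the adjacency matrix of the associated directed graph, and let ρ be the Perron (largest positive real) eigenvalue of A. Then α = log₂(ρ) satisfies ∑_{i=1}^n d_i · 2^{−α i} = 1; i.e., log₂(ρ) equals the channel capacity of the length function ℓ_T induced by T. -/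
open scoped Classical

/-- The terminal nodes of `T` extending `u`. -/
noncomputable def c14TermSet {m : ℕ} (T : Finset (List (Fin m))) (u : List (Fin m)) :
    Finset (List (Fin m)) :=
  T.filter (fun τ => IsTerminal T τ ∧ u <+: τ)

/-- The generating value `h(u) = ∑_{τ terminal ⊇ u} ρ⁻¹^(|τ|-|u|)`. -/
noncomputable def c14h {m : ℕ} (T : Finset (List (Fin m))) (ρ : ℝ) (u : List (Fin m)) : ℝ :=
  ∑ τ ∈ c14TermSet T u, ρ⁻¹ ^ (τ.length - u.length)

lemma c14_termSet_of_terminal {m : ℕ} {T : Finset (List (Fin m))} {v : List (Fin m)}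
    (hv : IsTerminal T v) : c14TermSet T v = {v} := by
  ext τ
  simp only [c14TermSet, Finset.mem_filter, Finset.mem_singleton]
  constructor
  · rintro ⟨hT, _, hpre⟩
    exact hv.2 τ hT hpre
  · rintro rfl
    exact ⟨hv.1, hv, List.prefix_refl _⟩

lemma c14_h_of_terminal {m : ℕ} {T : Finset (List (Fin m))} {v : List (Fin m)} (ρ : ℝ)
    (hv : IsTerminal T v) : c14h T ρ v = 1 := by
  simp [c14h, c14_termSet_of_terminal hv]

lemma c14_termSet_of_not_mem {m : ℕ} {T : Finset (List (Fin m))} (hdc : DownClosed T)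
    {v : List (Fin m)} (hv : v ∉ T) : c14TermSet T v = ∅ := by
  ext τ
  simp only [c14TermSet, Finset.mem_filter, Finset.notMem_empty, iff_false, not_and]
  intro hT _ hpre
  exact hv (hdc τ hT v hpre)

lemma c14_ne_of_nonterm {m : ℕ} {T : Finset (List (Fin m))} {u τ : List (Fin m)}
    (hu : u ∈ NonTerm T) (hτ : IsTerminal T τ) : τ ≠ u := by
  rintro rfl
  exact (Finset.mem_filter.mp hu).2 hτ

lemma c14_fiber {m : ℕ} (hm : 1 ≤ m) {T : Finset (List (Fin m))} {u : List (Fin m)}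
    (hu : u ∈ NonTerm T) (a : Fin m) :
    (c14TermSet T u).filter (fun τ => τ.getD u.length ⟨0, hm⟩ = a) = c14TermSet T (u ++ [a]) := by
  ext τ
  simp only [c14TermSet, Finset.mem_filter, and_assoc]
  constructor
  · rintro ⟨hT, hterm, hpre, hget⟩
    obtain ⟨r, rfl⟩ := hpre
    have hr : r ≠ [] := by
      rintro rfl
      exact c14_ne_of_nonterm hu hterm (by simp)
    obtain ⟨b, r', rfl⟩ := List.exists_cons_of_ne_nil hr
    have : b = a := by
      rw [List.getD_append_right u (b :: r') ⟨0, hm⟩ u.length le_rfl] at hget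
      simpa using hget
    subst this
    exact ⟨hT, hterm, ⟨r', by simp⟩⟩
  · rintro ⟨hT, hterm, hpre⟩
    obtain ⟨r, rfl⟩ := hpre
    refine ⟨hT, hterm, ?_, ?_⟩
    · exact ⟨a :: r, by simp⟩
    · rw [List.append_assoc]
      simpa using List.getD_append_right u ([a] ++ r) ⟨0, hm⟩ u.length le_rfl

lemma c14_h_rec {m : ℕ} (hm : 1 ≤ m) {T : Finset (List (Fin m))} (hdc : DownClosed T)
    {ρ : ℝ} (hρ : ρ ≠ 0) {u : List (Fin m)} (hu : u ∈ NonTerm T) :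
    ρ * c14h T ρ u =
      ((Finset.univ.filter (fun a : Fin m => IsTerminal T (u ++ [a]))).card : ℝ)
      + ∑ a ∈ Finset.univ.filter (fun a : Fin m => u ++ [a] ∈ NonTerm T), c14h T ρ (u ++ [a]) := by
  have hsplit : ρ * c14h T ρ u = ∑ a : Fin m, c14h T ρ (u ++ [a]) := by
    calc ρ * c14h T ρ u = ∑ τ ∈ c14TermSet T u, ρ * ρ⁻¹ ^ (τ.length - u.length) := by
          rw [c14h, Finset.mul_sum]
      _ = ∑ a : Fin m, ∑ τ ∈ (c14TermSet T u).filter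
            (fun τ => τ.getD u.length ⟨0, hm⟩ = a), ρ * ρ⁻¹ ^ (τ.length - u.length) :=
          (Finset.sum_fiberwise_of_maps_to (fun τ _ => Finset.mem_univ _) _).symm
      _ = ∑ a : Fin m, c14h T ρ (u ++ [a]) := by
          refine Finset.sum_congr rfl fun a _ => ?_
          rw [c14_fiber hm hu a, c14h]
          refine Finset.sum_congr rfl fun τ hτ => ?_
          have hpre : (u ++ [a]) <+: τ := ((Finset.mem_filter.mp hτ).2).2
          have hlen : u.length + 1 ≤ τ.length := by simpa using hpre.length_le
          have hexp : τ.length - u.length = (τ.length - (u ++ [a]).length) + 1 := by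
            simp only [List.length_append, List.length_singleton]
            omega
          rw [hexp, pow_succ, mul_comm, mul_assoc, inv_mul_cancel₀ hρ, mul_one]
  rw [hsplit, ← Finset.sum_filter_add_sum_filter_not Finset.univ
    (fun a : Fin m => IsTerminal T (u ++ [a]))]
  congr 1
  · rw [Finset.sum_congr rfl (fun a ha => c14_h_of_terminal ρ (Finset.mem_filter.mp ha).2),
      Finset.sum_const, nsmul_eq_mul, mul_one]
  · refine (Finset.sum_subset ?_ ?_).symm
    · intro a ha
      simp only [Finset.mem_filter, Finset.mem_univ, true_and] at ha ⊢
      exact (Finset.mem_filter.mp ha).2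
    · intro a ha hna
      simp only [Finset.mem_filter, Finset.mem_univ, true_and] at ha hna
      have hmem : u ++ [a] ∉ T := by
        intro hT
        exact hna (Finset.mem_filter.mpr ⟨hT, ha⟩)
      simp [c14h, c14_termSet_of_not_mem hdc hmem]

/-- Let T be a finite tree with n non-terminal nodes and terminal-node
depth counts d_1,...,d_n.  Let A be the adjacency matrix (over ℝ) of the associated
pointed directed graph, and let ρ be the Perron eigenvalue of A (its largest real
root of the characteristic polynomial, which is positive).  Then α = log₂ ρ satisfies
∑_{i=1}^n d_i · 2^{−α·i} = 1, i.e. log₂ ρ is the channel capacity of ℓ_T. -/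
theorem log_perron_eq_channel_capacity {m : ℕ} (hm : 1 ≤ m)
    (T : Finset (List (Fin m))) (hdc : DownClosed T)
    (hroot : ([] : List (Fin m)) ∈ T) (hnt : ¬ IsTerminal T ([] : List (Fin m)))
    (A : Matrix (NonTerm T) (NonTerm T) ℝ)
    (hA : ∀ u v : NonTerm T, A u v =
      ((Finset.univ.filter (fun a : Fin m =>
          (u : List (Fin m)) ++ [a] = (v : List (Fin m)))).card : ℝ)
      + (if (v : List (Fin m)) = [] then
          ((Finset.univ.filter (fun a : Fin m =>
            IsTerminal T ((u : List (Fin m)) ++ [a]))).card : ℝ) else 0))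
    (ρ : ℝ) (hρpos : 0 < ρ)
    (hρroot : (Matrix.charpoly A).IsRoot ρ)
    (hρmax : ∀ t : ℝ, (Matrix.charpoly A).IsRoot t → t ≤ ρ) :
    ∑ i ∈ Finset.Icc 1 (Fintype.card (NonTerm T)),
        ((T.filter (fun σ => IsTerminal T σ ∧ σ.length = i)).card : ℝ)
          * (2 : ℝ) ^ (-(Real.logb 2 ρ * (i : ℝ))) = 1 := by
  have hρne : ρ ≠ 0 := ne_of_gt hρpos
  have hroot' : ([] : List (Fin m)) ∈ NonTerm T := Finset.mem_filter.mpr ⟨hroot, hnt⟩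
  -- Step 1: eigenvector
  have hev : Polynomial.eval ρ (Matrix.charpoly A)
      = Matrix.det ((Matrix.charmatrix A).map (Polynomial.eval ρ)) := by
    rw [Matrix.charpoly]
    exact RingHom.map_det (Polynomial.evalRingHom ρ) _
  have hmap : (Matrix.charmatrix A).map (Polynomial.eval ρ)
      = ρ • (1 : Matrix (NonTerm T) (NonTerm T) ℝ) - A := by
    ext i j
    by_cases hij : i = j
    · subst hij
      simp [Matrix.charmatrix_apply_eq, Matrix.one_apply]
    · simp [Matrix.charmatrix_apply_ne _ _ _ hij, Matrix.one_apply_ne hij]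
  have hdet : (ρ • (1 : Matrix (NonTerm T) (NonTerm T) ℝ) - A).det = 0 := by
    rw [← hmap, ← hev]; exact hρroot
  obtain ⟨v, hv0, hveq⟩ := Matrix.exists_mulVec_eq_zero_iff.mpr hdet
  have hAv : A.mulVec v = ρ • v := by
    have h1 : (ρ • (1 : Matrix (NonTerm T) (NonTerm T) ℝ) - A).mulVec v
        = ρ • v - A.mulVec v := by
      rw [Matrix.sub_mulVec, Matrix.smul_mulVec, Matrix.one_mulVec]
    rw [h1] at hveq
    exact (sub_eq_zero.mp hveq).symm
  -- Step 2: the vector on lists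
  set y : List (Fin m) → ℝ := fun l => if h : l ∈ NonTerm T then v ⟨l, h⟩ else 0 with hy
  have hyv : ∀ u : ↥(NonTerm T), y ↑u = v u := by
    intro u
    simp only [hy, dif_pos u.2, Subtype.coe_eta]
  -- Step 3: eigen equation on the tree
  have heq : ∀ u : ↥(NonTerm T), ρ * y ↑u =
      (∑ a : Fin m, y ((↑u : List (Fin m)) ++ [a]))
      + ((Finset.univ.filter (fun a : Fin m =>
          IsTerminal T ((↑u : List (Fin m)) ++ [a]))).card : ℝ) * y [] := by
    intro u
    have hmv : ∑ w : ↥(NonTerm T), A u w * v w = ρ * v u := by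
      have := congrFun hAv u
      simpa [Matrix.mulVec, dotProduct] using this
    have t2 : ∑ w : ↥(NonTerm T), (if (↑w : List (Fin m)) = [] then
        ((Finset.univ.filter (fun a : Fin m =>
          IsTerminal T ((↑u : List (Fin m)) ++ [a]))).card : ℝ) else 0) * v w
        = ((Finset.univ.filter (fun a : Fin m =>
          IsTerminal T ((↑u : List (Fin m)) ++ [a]))).card : ℝ) * v ⟨[], hroot'⟩ := by
      rw [Finset.sum_eq_single (⟨[], hroot'⟩ : ↥(NonTerm T))]
      · simp
      · intro w _ hw
        have hne : (↑w : List (Fin m)) ≠ [] := fun h => hw (Subtype.ext h)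
        simp [hne]
      · intro h; exact absurd (Finset.mem_univ _) h
    have t1 : ∑ w : ↥(NonTerm T), ((Finset.univ.filter (fun a : Fin m =>
          (↑u : List (Fin m)) ++ [a] = ↑w)).card : ℝ) * v w
        = ∑ a : Fin m, y ((↑u : List (Fin m)) ++ [a]) := by
      have hrw : ∀ w : ↥(NonTerm T), ((Finset.univ.filter (fun a : Fin m =>
          (↑u : List (Fin m)) ++ [a] = ↑w)).card : ℝ) * v w
          = ∑ a : Fin m, if (↑u : List (Fin m)) ++ [a] = ↑w then v w else 0 := by
        intro w
        rw [Finset.card_filter]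
        push_cast
        rw [Finset.sum_mul]
        exact Finset.sum_congr rfl fun a _ => by split <;> simp
      rw [Finset.sum_congr rfl (fun w _ => hrw w), Finset.sum_comm]
      refine Finset.sum_congr rfl fun a _ => ?_
      by_cases hmem : (↑u : List (Fin m)) ++ [a] ∈ NonTerm T
      · rw [Finset.sum_eq_single (⟨(↑u : List (Fin m)) ++ [a], hmem⟩ : ↥(NonTerm T))]
        · simp [hy, hmem]
        · intro w _ hw
          have hne : (↑u : List (Fin m)) ++ [a] ≠ ↑w := by
            intro h; exact hw (Subtype.ext h.symm)
          simp [hne]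
        · intro h; exact absurd (Finset.mem_univ _) h
      · have hzero : ∀ w : ↥(NonTerm T),
            (if (↑u : List (Fin m)) ++ [a] = ↑w then v w else 0) = 0 := by
          intro w
          rw [if_neg]
          intro h
          exact hmem (h ▸ w.2)
        simp [hzero, hy, hmem]
    calc ρ * y ↑u = ρ * v u := by rw [hyv u]
      _ = ∑ w : ↥(NonTerm T), A u w * v w := hmv.symm
      _ = ∑ w : ↥(NonTerm T), (((Finset.univ.filter (fun a : Fin m =>
            (↑u : List (Fin m)) ++ [a] = ↑w)).card : ℝ) * v w
          + (if (↑w : List (Fin m)) = [] then ((Finset.univ.filter (fun a : Fin m =>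
              IsTerminal T ((↑u : List (Fin m)) ++ [a]))).card : ℝ) else 0) * v w) := by
          refine Finset.sum_congr rfl fun w _ => ?_
          rw [hA u w, add_mul]
      _ = _ := by
          rw [Finset.sum_add_distrib, t1, t2, hyv ⟨[], hroot'⟩]
  -- Step 4: induction
  set N : ℕ := T.sup List.length + 1 with hN
  have hlenT : ∀ w ∈ T, w.length < N := fun w hw => Nat.lt_succ_of_le (Finset.le_sup hw)
  have key : ∀ k : ℕ, ∀ u : List (Fin m), ∀ hu : u ∈ NonTerm T,
      N - u.length ≤ k → y u = c14h T ρ u * y [] := by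
    intro k
    induction k with
    | zero =>
      intro u hu hle
      have := hlenT u (Finset.mem_filter.mp hu).1
      omega
    | succ k ih =>
      intro u hu hle
      have hulen : u.length < N := hlenT u (Finset.mem_filter.mp hu).1
      have hrec := c14_h_rec hm hdc hρne hu
      have heql := heq ⟨u, hu⟩
      simp only [Subtype.coe_mk] at heql
      have hchild : ∑ a : Fin m, y (u ++ [a]) =
          (∑ a ∈ Finset.univ.filter (fun a : Fin m => u ++ [a] ∈ NonTerm T),
            c14h T ρ (u ++ [a])) * y [] := by
        rw [Finset.sum_mul,
          ← Finset.sum_filter_add_sum_filter_not Finset.univ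
            (fun a : Fin m => u ++ [a] ∈ NonTerm T) (fun a => y (u ++ [a]))]
        have hz : ∑ a ∈ Finset.univ.filter
            (fun a : Fin m => ¬(u ++ [a] ∈ NonTerm T)), y (u ++ [a]) = 0 := by
          refine Finset.sum_eq_zero fun a ha => ?_
          have hna := (Finset.mem_filter.mp ha).2
          simp [hy, hna]
        rw [hz, add_zero]
        refine Finset.sum_congr rfl fun a ha => ?_
        have hmem := (Finset.mem_filter.mp ha).2
        refine ih (u ++ [a]) hmem ?_
        simp only [List.length_append, List.length_singleton]
        omega
      have h2 : ρ * y u = ρ * (c14h T ρ u * y []) := by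
        rw [heql, hchild, ← mul_assoc, hrec]; ring
      exact mul_left_cancel₀ hρne h2
  -- Step 5: y [] ≠ 0 and h [] = 1
  have hyne : y [] ≠ 0 := by
    intro h0
    apply hv0
    funext w
    have hw := key (N - (↑w : List (Fin m)).length) ↑w w.2 le_rfl
    rw [h0, mul_zero] at hw
    rw [hyv w] at hw
    exact hw
  have hone := key N [] hroot' (by omega)
  have hh1 : c14h T ρ [] = 1 := by
    refine mul_right_cancel₀ hyne ?_
    rw [← hone, one_mul]
  -- Step 6: regroup by depth
  have hpow : ∀ i : ℕ, (2:ℝ) ^ (-(Real.logb 2 ρ * (i : ℝ))) = ρ⁻¹ ^ i := by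
    intro i
    have h2 : (2:ℝ) ^ (Real.logb 2 ρ) = ρ :=
      Real.rpow_logb (by norm_num) (by norm_num) hρpos
    rw [show -(Real.logb 2 ρ * (i:ℝ)) = Real.logb 2 ρ * (-(i:ℝ)) by ring,
      Real.rpow_mul (by norm_num : (0:ℝ) ≤ 2), h2,
      Real.rpow_neg hρpos.le, Real.rpow_natCast, ← inv_pow]
  have hmaps : ∀ τ ∈ c14TermSet T [], τ.length ∈ Finset.Icc 1 (Fintype.card (NonTerm T)) := by
    intro τ hτ
    obtain ⟨hT, hterm, -⟩ : τ ∈ T ∧ IsTerminal T τ ∧ ([] : List (Fin m)) <+: τ := by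
      simpa [c14TermSet, and_assoc] using hτ
    rw [Finset.mem_Icc]
    constructor
    · rcases Nat.eq_zero_or_pos τ.length with h | h
      · exact absurd (List.length_eq_zero_iff.mp h ▸ hterm) hnt
      · exact h
    · rw [Fintype.card_coe]
      have hcard : (Finset.range τ.length).card ≤ (NonTerm T).card := by
        refine Finset.card_le_card_of_injOn (fun i => τ.take i)
          (fun i hi => ?_) (fun i hi j hj hij => ?_)
        · rw [Finset.mem_coe, Finset.mem_range] at hi
          refine Finset.mem_filter.mpr ⟨hdc τ hT _ (List.take_prefix i τ), ?_⟩
          intro hterm2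
          have heq2 : τ = τ.take i := hterm2.2 τ hT (List.take_prefix i τ)
          have := congrArg List.length heq2
          rw [List.length_take] at this
          omega
        · rw [Finset.mem_coe, Finset.mem_range] at hi hj
          have := congrArg List.length hij
          simpa [List.length_take, Nat.min_eq_left hi.le, Nat.min_eq_left hj.le] using this
      simpa using hcard
  have hsum := Finset.sum_fiberwise_of_maps_to hmaps (fun τ => ρ⁻¹ ^ τ.length)
  calc ∑ i ∈ Finset.Icc 1 (Fintype.card (NonTerm T)),
        ((T.filter (fun σ => IsTerminal T σ ∧ σ.length = i)).card : ℝ)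
          * (2 : ℝ) ^ (-(Real.logb 2 ρ * (i : ℝ)))
      = ∑ i ∈ Finset.Icc 1 (Fintype.card (NonTerm T)),
          ∑ τ ∈ (c14TermSet T []).filter (fun τ => τ.length = i), ρ⁻¹ ^ τ.length := by
        refine Finset.sum_congr rfl fun i _ => ?_
        rw [hpow i]
        have hset : (c14TermSet T []).filter (fun τ => τ.length = i)
            = T.filter (fun σ => IsTerminal T σ ∧ σ.length = i) := by
          ext τ
          simp [c14TermSet, Finset.mem_filter, and_assoc]
        rw [hset, Finset.sum_congr rfl
          (fun τ hτ => by rw [(Finset.mem_filter.mp hτ).2.2]),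
          Finset.sum_const, nsmul_eq_mul]
    _ = ∑ τ ∈ c14TermSet T [], ρ⁻¹ ^ τ.length := hsum
    _ = c14h T ρ [] := by simp [c14h]
    _ = 1 := hh1
end

section
/- Let G be the pointed directed graph associated to a finite tree T with distinguished vertex v_1, and let x be an infinite walk through G starting at v_1. Then the sequence of edge labels of x lies in F_T, the set of infinite paths through the self-similar tree T^*; conversely every element of F_T arises as the label sequence of a unique infinite walk in G starting at v_1. -/
/-- σ belongs to the self-similar tree T^* generated by T: σ is a concatenation of
terminal nodes of T followed by an element of T. -/
def InTstar {m : ℕ} (T : Finset (List (Fin m))) (σ : List (Fin m)) : Prop :=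
  ∃ (l : List (List (Fin m))) (ρ : List (Fin m)),
    (∀ τ ∈ l, IsTerminal T τ) ∧ ρ ∈ T ∧ σ = l.flatten ++ ρ

/-- One labelled step of the pointed graph G associated to T: from the vertex
(non-terminal node) u, reading symbol s, one moves to the non-terminal child u⌢s if
it is non-terminal, and back to the root [] if u⌢s is a terminal node of T. -/
def Step {m : ℕ} (T : Finset (List (Fin m))) (u : List (Fin m)) (s : Fin m)
    (v : List (Fin m)) : Prop :=
  u ++ [s] ∈ T ∧
    ((IsTerminal T (u ++ [s]) ∧ v = []) ∨ (¬ IsTerminal T (u ++ [s]) ∧ v = u ++ [s]))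

lemma seg_zero {m : ℕ} (x : ℕ → Fin m) : seg x 0 0 = [] := by simp [seg]

lemma seg_succ {m : ℕ} (x : ℕ → Fin m) (N : ℕ) :
    seg x 0 (N + 1) = seg x 0 N ++ [x N] := by
  unfold seg
  simp only [Nat.sub_zero, Nat.zero_add]
  rw [List.ofFn_succ']
  simp [List.concat_eq_append]

open Classical in
/-- The canonical walk through G reading the sequence x. -/
noncomputable def walk {m : ℕ} (T : Finset (List (Fin m))) (x : ℕ → Fin m) : ℕ → List (Fin m)
  | 0 => []
  | (t + 1) =>
      if IsTerminal T (walk T x t ++ [x t]) then [] else walk T x t ++ [x t]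

lemma step_det {m : ℕ} {T : Finset (List (Fin m))} {u v v' : List (Fin m)} {s : Fin m}
    (h : Step T u s v) (h' : Step T u s v') : v = v' := by
  rcases h with ⟨_, (⟨ht, rfl⟩ | ⟨ht, rfl⟩)⟩ <;>
    rcases h' with ⟨_, (⟨ht', rfl⟩ | ⟨ht', rfl⟩)⟩ <;> first | rfl | exact absurd ht ht' | exact absurd ht' ht

/-- Unique parsing lemma. -/
lemma parse {m : ℕ} {T : Finset (List (Fin m))}
    (hnt : ¬ IsTerminal T ([] : List (Fin m))) :
    ∀ (l l' : List (List (Fin m))) (τ ρ : List (Fin m)) (s : Fin m),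
      (∀ κ ∈ l, IsTerminal T κ) → (∀ κ ∈ l', IsTerminal T κ) →
      τ ∈ T → ¬ IsTerminal T τ → ρ ∈ T →
      l.flatten ++ (τ ++ [s]) = l'.flatten ++ ρ → τ ++ [s] ∈ T := by
  intro l
  induction l with
  | nil =>
    intro l' τ ρ s _ hl' hτ hτn hρ heq
    cases l' with
    | nil =>
      simp only [List.flatten_nil, List.nil_append] at heq
      exact heq ▸ hρ
    | cons κ rest =>
      have hκ : IsTerminal T κ := hl' κ (by simp)
      simp only [List.flatten_cons, List.nil_append, List.append_assoc] at heq
      have hpre : κ <+: τ ++ [s] := ⟨rest.flatten ++ ρ, heq.symm⟩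
      rcases List.prefix_or_prefix_of_prefix hpre (List.prefix_append τ [s]) with h1 | h1
      · exact absurd (hκ.2 τ hτ h1 ▸ hκ) hτn
      · -- τ <+: κ and κ <+: τ ++ [s]
        have hlen : κ.length ≤ τ.length + 1 := by simpa using hpre.length_le
        have hlen2 : τ.length ≤ κ.length := h1.length_le
        rcases Nat.eq_or_lt_of_le hlen2 with h2 | h2
        · have h3 : τ = κ := h1.eq_of_length h2
          exact absurd (h3 ▸ hκ) hτn
        · have h3 : κ = τ ++ [s] := hpre.eq_of_length (by
            simp only [List.length_append, List.length_singleton]; omega)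
          exact h3 ▸ hκ.1
  | cons κ rest ih =>
    intro l' τ ρ s hl hl' hτ hτn hρ heq
    have hκ : IsTerminal T κ := hl κ (by simp)
    cases l' with
    | nil =>
      simp only [List.flatten_cons, List.flatten_nil, List.nil_append, List.append_assoc] at heq
      have hpre : κ <+: ρ := ⟨rest.flatten ++ (τ ++ [s]), heq⟩
      have := hκ.2 ρ hρ hpre
      subst this
      have := congrArg List.length heq
      simp at this
    | cons κ' rest' =>
      have hκ' : IsTerminal T κ' := hl' κ' (by simp)
      simp only [List.flatten_cons, List.append_assoc] at heq
      have h1 : κ <+: κ' ++ (rest'.flatten ++ ρ) := ⟨rest.flatten ++ (τ ++ [s]), heq⟩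
      have h2 : κ' <+: κ' ++ (rest'.flatten ++ ρ) := List.prefix_append _ _
      have hκκ' : κ = κ' := by
        rcases List.prefix_or_prefix_of_prefix h1 h2 with h | h
        · exact (hκ.2 κ' hκ'.1 h).symm
        · exact hκ'.2 κ hκ.1 h
      subst hκκ'
      have heq2 : rest.flatten ++ (τ ++ [s]) = rest'.flatten ++ ρ :=
        List.append_cancel_left heq
      exact ih rest' τ ρ s (fun κ₀ h₀ => hl κ₀ (by simp [h₀])) (fun κ₀ h₀ => hl' κ₀ (by simp [h₀]))
        hτ hτn hρ heq2

/-- Let G be the pointed directed graph associated to a finite tree T,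
with distinguished vertex v_1 = [].  The label sequence of every infinite walk through
G starting at v_1 lies in F_T = [T^*]; conversely, every element of F_T is the label
sequence of a unique infinite walk in G starting at v_1. -/
theorem walks_eq_fractal_paths {m : ℕ} (hm : 1 ≤ m)
    (T : Finset (List (Fin m))) (hdc : DownClosed T)
    (hroot : ([] : List (Fin m)) ∈ T) (hnt : ¬ IsTerminal T ([] : List (Fin m))) :
    (∀ (w : ℕ → List (Fin m)) (a : ℕ → Fin m), w 0 = [] →
        (∀ t, Step T (w t) (a t) (w (t + 1))) →
        ∀ N : ℕ, InTstar T (seg a 0 N)) ∧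
    (∀ x : ℕ → Fin m, (∀ N : ℕ, InTstar T (seg x 0 N)) →
        ∃! w : ℕ → List (Fin m),
          w 0 = [] ∧ ∀ t, Step T (w t) (x t) (w (t + 1))) := by
  constructor
  · -- forward direction
    intro w a hw0 hstep N
    have key : ∀ t, ∃ l : List (List (Fin m)),
        (∀ κ ∈ l, IsTerminal T κ) ∧ w t ∈ T ∧ seg a 0 t = l.flatten ++ w t := by
      intro t
      induction t with
      | zero => exact ⟨[], by simp, hw0 ▸ hroot, by simp [seg_zero, hw0]⟩
      | succ t iht =>
        obtain ⟨l, hl, hwt, hseg⟩ := iht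
        obtain ⟨hmem, hcase⟩ := hstep t
        rcases hcase with ⟨hterm, hv⟩ | ⟨hterm, hv⟩
        · refine ⟨l ++ [w t ++ [a t]], ?_, hv ▸ hroot, ?_⟩
          · intro κ hκ
            rcases List.mem_append.1 hκ with h | h
            · exact hl κ h
            · simp at h; exact h ▸ hterm
          · rw [seg_succ, hseg, hv]; simp
        · exact ⟨l, hl, hv ▸ hmem, by rw [seg_succ, hseg, hv]; simp⟩
    obtain ⟨l, hl, hwN, hseg⟩ := key N
    exact ⟨l, w N, hl, hwN, hseg⟩
  · -- converse
    intro x hx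
    -- invariant for the canonical walk
    have inv : ∀ t, walk T x t ∈ T ∧ ¬ IsTerminal T (walk T x t) ∧
        ∃ l : List (List (Fin m)),
          (∀ κ ∈ l, IsTerminal T κ) ∧ seg x 0 t = l.flatten ++ walk T x t := by
      intro t
      induction t with
      | zero => exact ⟨hroot, hnt, [], by simp, by simp [seg_zero, walk]⟩
      | succ t iht =>
        obtain ⟨hmem, hterm, l, hl, hseg⟩ := iht
        -- show walk T x t ++ [x t] ∈ T
        obtain ⟨l', ρ, hl', hρ, hdecomp⟩ := hx (t + 1)
        have heq : l.flatten ++ (walk T x t ++ [x t]) = l'.flatten ++ ρ := by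
          rw [← List.append_assoc, ← hseg, ← seg_succ]; exact hdecomp
        have hin : walk T x t ++ [x t] ∈ T := parse hnt l l' _ ρ (x t) hl hl' hmem hterm hρ heq
        by_cases ht : IsTerminal T (walk T x t ++ [x t])
        · have hw : walk T x (t + 1) = [] := by simp [walk, ht]
          refine ⟨hw ▸ hroot, hw ▸ hnt, l ++ [walk T x t ++ [x t]], ?_, ?_⟩
          · intro κ hκ
            rcases List.mem_append.1 hκ with h | h
            · exact hl κ h
            · simp at h; exact h ▸ ht
          · rw [seg_succ, hseg, hw]; simp
        · have hw : walk T x (t + 1) = walk T x t ++ [x t] := by simp [walk, ht]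
          exact ⟨hw ▸ hin, hw ▸ ht, l, hl, by rw [seg_succ, hseg, hw]; simp⟩
    have hstep : ∀ t, Step T (walk T x t) (x t) (walk T x (t + 1)) := by
      intro t
      obtain ⟨hmem, hterm, l, hl, hseg⟩ := inv t
      obtain ⟨l', ρ, hl', hρ, hdecomp⟩ := hx (t + 1)
      have heq : l.flatten ++ (walk T x t ++ [x t]) = l'.flatten ++ ρ := by
        rw [← List.append_assoc, ← hseg, ← seg_succ]; exact hdecomp
      have hin : walk T x t ++ [x t] ∈ T := parse hnt l l' _ ρ (x t) hl hl' hmem hterm hρ heq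
      refine ⟨hin, ?_⟩
      by_cases ht : IsTerminal T (walk T x t ++ [x t])
      · exact Or.inl ⟨ht, by simp [walk, ht]⟩
      · exact Or.inr ⟨ht, by simp [walk, ht]⟩
    refine ⟨walk T x, ⟨rfl, hstep⟩, ?_⟩
    intro w' ⟨hw0', hstep'⟩
    funext t
    induction t with
    | zero => exact hw0' ▸ rfl
    | succ t iht =>
      have := hstep' t
      rw [iht] at this
      exact step_det this (hstep t)
end
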